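/- Let A and B be abelian categories with enough injectives, let F : A ⥤ B be an exact functor with right adjoint G : B ⥤ A (so G is additive and left exact). Assume that for every object N of A the unit of adjunction N → G(F(N)) is an isomorphism, and that for every i ≥ 1 the i-th right derived functor of G vanishes on F(N), i.e., (R^i G)(F(N)) = 0. Fix a natural number d. If every object of B admits an injective resolution of length at most d, then every object of A admits an injective resolution of length at most d. -/

import Mathlib

open CategoryTheory Limits

/-- `M` admits an injective resolution of length at most `d`, i.e. an exact sequence
`0 → M → I⁰ → I¹ → ⋯ → I^d → 0` with every `I^j` injective.  We encode the sequence by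
extending it by zero objects in degrees `> d`. -/
def HasInjectiveResolutionOfLength {C : Type*} [Category C] [Abelian C] (d : ℕ) (M : C) :
    Prop :=
  ∃ (I : ℕ → C) (ι : M ⟶ I 0) (δ : ∀ j : ℕ, I j ⟶ I (j + 1))
    (w0 : ι ≫ δ 0 = 0) (w : ∀ j : ℕ, δ j ≫ δ (j + 1) = 0),
    (∀ j : ℕ, j ≤ d → Injective (I j)) ∧
    (∀ j : ℕ, d < j → IsZero (I j)) ∧
    Mono ι ∧
    (ShortComplex.mk ι (δ 0) w0).Exact ∧
    (∀ j : ℕ, (ShortComplex.mk (δ j) (δ (j + 1)) (w j)).Exact)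

/-- A zero object is injective. -/
lemma isZero_injective {C : Type*} [Category C] [Abelian C] {X : C} (h : IsZero X) :
    Injective X :=
  ⟨fun g f _ => ⟨0, by rw [comp_zero]; exact (h.eq_of_tgt g 0).symm⟩⟩

/-- Build a bundled `InjectiveResolution` from explicit data. -/
noncomputable def mkInjRes {C : Type*} [Category C] [Abelian C] {N : C}
    (I : ℕ → C) (ι : N ⟶ I 0) (δ : ∀ j : ℕ, I j ⟶ I (j + 1))
    (w0 : ι ≫ δ 0 = 0) (w : ∀ j : ℕ, δ j ≫ δ (j + 1) = 0)
    (hinj : ∀ j, Injective (I j)) (hmono : Mono ι)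
    (hex0 : (ShortComplex.mk ι (δ 0) w0).Exact)
    (hex : ∀ j : ℕ, (ShortComplex.mk (δ j) (δ (j + 1)) (w j)).Exact) :
    InjectiveResolution N where
  cocomplex := CochainComplex.of I δ w
  injective := hinj
  ι := (CochainComplex.fromSingle₀Equiv _ _).symm
    ⟨ι, by rw [show (CochainComplex.of I δ w).d 0 1 = δ 0 from CochainComplex.of_d I δ 0]; exact w0⟩
  quasiIso := ⟨fun n => by
    cases n with
    | zero =>
      rw [CochainComplex.quasiIsoAt₀_iff, ShortComplex.quasiIso_iff_of_zeros]
      · refine (ShortComplex.exact_and_mono_f_iff_of_iso ?_).2 ⟨hex0, hmono⟩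
        refine ShortComplex.isoMk (Iso.refl _) (Iso.refl _) (Iso.refl _) ?_ ?_
        · dsimp
          erw [Category.id_comp, Category.comp_id]
          simp [CochainComplex.fromSingle₀Equiv, HomologicalComplex.mkHomFromSingle_f]
          rfl
        · dsimp
          erw [Category.id_comp, Category.comp_id]
          first
          | exact CochainComplex.of_d I δ 0
          | exact (CochainComplex.of_d I δ 0).symm
      all_goals rfl
    | succ n =>
      rw [quasiIsoAt_iff_exactAt]
      · rw [HomologicalComplex.exactAt_iff' _ n (n + 1) (n + 1 + 1) (by simp) (by simp)]
        refine (ShortComplex.exact_iff_of_iso ?_).1 (hex n)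
        refine ShortComplex.isoMk (Iso.refl _) (Iso.refl _) (Iso.refl _) ?_ ?_
        · dsimp
          erw [Category.id_comp, Category.comp_id]
          exact CochainComplex.of_d I δ n
        · dsimp
          erw [Category.id_comp, Category.comp_id]
          exact CochainComplex.of_d I δ (n + 1)
      · apply CochainComplex.exactAt_succ_single_obj⟩

/-- Let `F : A ⥤ B` be exact with right adjoint `G`.  If the unit `N ⟶ G(F(N))` is always an
isomorphism and the higher right derived functors of `G` vanish on objects of the form
`F(N)`, then finite injective dimension `≤ d` descends from `B` to `A`. -/
theorem injDim_le_of_unit_iso_and_derived_vanishing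
    {A B : Type*} [Category A] [Category B] [Abelian A] [Abelian B]
    [EnoughInjectives A] [EnoughInjectives B]
    (F : A ⥤ B) (G : B ⥤ A) (adj : F ⊣ G)
    [PreservesFiniteLimits F] [PreservesFiniteColimits F] [G.Additive]
    (hunit : ∀ N : A, IsIso (adj.unit.app N))
    (hvanish : ∀ (N : A) (i : ℕ), 1 ≤ i → IsZero ((G.rightDerived i).obj (F.obj N)))
    (d : ℕ) (h : ∀ N : B, HasInjectiveResolutionOfLength d N) :
    ∀ M : A, HasInjectiveResolutionOfLength d M := by
  intro M
  obtain ⟨I, ι, δ, w0, w, hinj, hzero, hmono, hex0, hex⟩ := h (F.obj M)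
  haveI := adj.rightAdjoint_preservesLimits
  haveI hGfin : PreservesFiniteLimits G := inferInstance
  have hinjAll : ∀ j, Injective (I j) := fun j => by
    by_cases hj : j ≤ d
    · exact hinj j hj
    · exact isZero_injective (hzero j (lt_of_not_ge hj))
  let R : InjectiveResolution (F.obj M) := mkInjRes I ι δ w0 w hinjAll hmono hex0 hex
  have hRc : R.cocomplex = CochainComplex.of I δ w := rfl
  -- exactness of `G` applied to the resolution, in positive degrees
  have hexK : ∀ n : ℕ,
      ((G.mapHomologicalComplex (ComplexShape.up ℕ)).obj R.cocomplex).ExactAt (n + 1) :=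
    fun n => by
      rw [HomologicalComplex.exactAt_iff_isZero_homology]
      exact (hvanish M (n + 1) (by omega)).of_iso (R.isoRightDerivedObj G (n + 1)).symm
  have hGw0 : (adj.unit.app M ≫ G.map ι) ≫ G.map (δ 0) = 0 := by
    rw [Category.assoc, ← G.map_comp, w0, G.map_zero, comp_zero]
  refine ⟨fun j => G.obj (I j), adj.unit.app M ≫ G.map ι, fun j => G.map (δ j), hGw0,
    fun j => by rw [← G.map_comp, w j, G.map_zero], ?_, ?_, ?_, ?_, ?_⟩
  · intro j hj
    haveI := hinj j hj
    exact Injective.injective_of_adjoint adj (I j)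
  · intro j hj
    exact G.map_isZero (hzero j hj)
  · haveI := hunit M
    haveI : Mono (G.map ι) := inferInstance
    exact mono_comp _ _
  · -- exactness in degree 0, by left exactness of `G`
    have hGle := ((Functor.preservesFiniteLimits_tfae G).out 3 1).1 hGfin
    have h1 := hGle (ShortComplex.mk ι (δ 0) w0) ⟨hex0, hmono⟩
    haveI := hunit M
    refine ((ShortComplex.exact_and_mono_f_iff_of_iso ?_).1 h1).1
    refine ShortComplex.isoMk (asIso (adj.unit.app M)).symm (Iso.refl _) (Iso.refl _) ?_ ?_
    · dsimp [ShortComplex.map]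
      rw [Category.comp_id, IsIso.inv_hom_id_assoc]
    · dsimp [ShortComplex.map]
      rw [Category.comp_id, Category.id_comp]
  · -- exactness in positive degrees
    intro j
    have h2 := (HomologicalComplex.exactAt_iff'
      ((G.mapHomologicalComplex (ComplexShape.up ℕ)).obj R.cocomplex)
      j (j + 1) (j + 1 + 1) (by simp) (by simp)).1 (hexK j)
    refine (ShortComplex.exact_iff_of_iso ?_).1 h2
    refine ShortComplex.isoMk (Iso.refl _) (Iso.refl _) (Iso.refl _) ?_ ?_
    · dsimp
      erw [Category.id_comp, Category.comp_id]
      exact congrArg G.map (CochainComplex.of_d I δ j).symm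
    · dsimp
      erw [Category.id_comp, Category.comp_id]
      exact congrArg G.map (CochainComplex.of_d I δ (j + 1)).symm
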